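/- A set C ⊆ X^n has minimum distance 3 and cardinality 2^{n-1} (i.e., is a perfect distance-3 code) if and only if the corresponding set M = χ^{-1}(C) of edges of the hypercube {0,1}^n is a perfect matching in which no two distinct parallel edges are at distance 1 or 2 from each other. -/

import Mathlib

/-- Binary words of length `n`. -/
abbrev BW (n : ℕ) := Fin n → ZMod 2

/-- Ternary words of length `n` over `{0,1,*}`, with `none` playing the role of `*`. -/
abbrev TW (n : ℕ) := Fin n → Option (ZMod 2)

/-- Membership in `X^n`: exactly one coordinate equals `*`. -/
def isX {n : ℕ} (w : TW n) : Prop := (Finset.univ.filter (fun i => w i = none)).card = 1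

/-- Embedding of binary words into ternary words. -/
def emb {n : ℕ} (x : BW n) : TW n := fun i => some (x i)

open Finset

lemma hd_eq {n : ℕ} (x y : TW n) :
    hammingDist x y = (univ.filter fun i => x i ≠ y i).card := rfl

lemma hd_eq' {n : ℕ} (x y : BW n) :
    hammingDist x y = (univ.filter fun i => x i ≠ y i).card := rfl

/-- unique star -/
lemma star_of_isX {n : ℕ} {c : TW n} (h : isX c) :
    ∃ j, c j = none ∧ ∀ i, c i = none → i = j := by
  rw [isX, Finset.card_eq_one] at h
  obtain ⟨j, hj⟩ := h
  have hmem : ∀ i, c i = none ↔ i = j := by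
    intro i
    have := Finset.ext_iff.1 hj i
    simpa using this
  exact ⟨j, (hmem j).2 rfl, fun i hi => (hmem i).1 hi⟩

lemma endpoint_iff {n : ℕ} {c : TW n} {j : Fin n} (hj : c j = none)
    (v : BW n) : hammingDist (emb v) c = 1 ↔ ∀ i, i ≠ j → c i = some (v i) := by
  rw [hd_eq, Finset.card_eq_one]
  constructor
  · rintro ⟨k, hk⟩
    have hjmem : j ∈ univ.filter fun i => emb v i ≠ c i := mem_filter.2 ⟨mem_univ _, by simp [emb, hj]⟩
    rw [hk, mem_singleton] at hjmem
    subst hjmem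
    intro i hi
    by_contra h
    have : i ∈ univ.filter fun i => emb v i ≠ c i := by
      simp only [mem_filter, mem_univ, true_and, emb]
      exact mem_filter.2 ⟨mem_univ _, fun h' => h h'.symm⟩
    rw [hk, mem_singleton] at this
    exact hi this
  · intro h
    refine ⟨j, ?_⟩
    ext i
    simp only [mem_filter, mem_univ, true_and, mem_singleton]
    constructor
    · intro hne
      by_contra hij
      exact hne (by rw [h i hij]; rfl)
    · rintro rfl
      simp [emb, hj]

/-- The edge of `c`. -/
def E {n : ℕ} (c : TW n) : Finset (BW n) :=
  univ.filter fun v => hammingDist (emb v) c = 1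

lemma mem_E {n : ℕ} {c : TW n} {v : BW n} :
    v ∈ E c ↔ hammingDist (emb v) c = 1 := by simp [E]

lemma card_E {n : ℕ} {c : TW n} {j : Fin n} (hj : c j = none)
    (hu : ∀ i, c i = none → i = j) : (E c).card = 2 := by
  classical
  set v0 : BW n := fun i => if i = j then 0 else (c i).getD 0 with hv0
  set v1 : BW n := fun i => if i = j then 1 else (c i).getD 0 with hv1
  have hsome : ∀ i, i ≠ j → c i = some ((c i).getD 0) := by
    intro i hi
    cases hci : c i with
    | none => exact absurd (hu i hci) hi
    | some a => rfl
  have hmem : ∀ b : ZMod 2, (fun i => if i = j then b else (c i).getD 0) ∈ E c := by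
    intro b
    rw [mem_E, endpoint_iff hj]
    intro i hi
    simp only [if_neg hi]
    exact hsome i hi
  have hEeq : E c = {v0, v1} := by
    ext v
    simp only [mem_insert, mem_singleton]
    constructor
    · intro hv
      rw [mem_E, endpoint_iff hj] at hv
      have key : ∀ b : ZMod 2, v j = b → v = fun i => if i = j then b else (c i).getD 0 := by
        intro b hb
        funext i
        by_cases hi : i = j
        · subst hi; simp [hb]
        · simp only [if_neg hi]
          have := hv i hi
          rw [hsome i hi] at this
          exact (Option.some_injective _ this).symm
      rcases (by decide : ∀ b : ZMod 2, b = 0 ∨ b = 1) (v j) with h | h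
      · exact Or.inl (key 0 h)
      · exact Or.inr (key 1 h)
    · rintro (rfl | rfl)
      · exact hmem 0
      · exact hmem 1
  rw [hEeq]
  rw [card_insert_of_notMem, card_singleton]
  simp only [mem_singleton]
  intro h
  have := congrFun h j
  simp [hv0, hv1] at this

lemma card_BW (n : ℕ) : Fintype.card (BW n) = 2 ^ n := by
  simp [BW]

lemma card_biUnion_E {n : ℕ} {C : Finset (TW n)} (hX : ∀ c ∈ C, isX c)
    (hdisj : ∀ (v : BW n) (c : TW n), c ∈ C → ∀ c' ∈ C,
      hammingDist (emb v) c = 1 → hammingDist (emb v) c' = 1 → c = c') :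
    (C.biUnion E).card = 2 * C.card := by
  classical
  rw [Finset.card_biUnion]
  · rw [Finset.sum_congr rfl fun c hc => ?_]
    · rw [Finset.sum_const, smul_eq_mul, mul_comm]
    · obtain ⟨j, hj, hu⟩ := star_of_isX (hX c hc)
      exact card_E hj hu
  · intro c hc c' hc' hne
    rw [Function.onFun, Finset.disjoint_left]
    intro v hv hv'
    exact hne (hdisj v c hc c' hc' (mem_E.1 hv) (mem_E.1 hv'))

/-- a set `C ⊆ X^n` has minimum distance 3 and cardinality `2^(n-1)`
(i.e. is a perfect distance-3 code) iff the corresponding set of hypercube edges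
(a binary word `v` is an endpoint of the edge `χ⁻¹(c)` iff `d_H(emb v, c) = 1`)
is a perfect matching (every vertex lies on exactly one edge of the set) such that
no two distinct parallel edges (same `*`-position) are at distance 1 or 2, i.e. all
pairs of endpoints of two distinct parallel edges are at Hamming distance ≥ 3. -/

theorem stmt7 {n : ℕ} (C : Finset (TW n)) (hX : ∀ c ∈ C, isX c) :
    ((∀ c ∈ C, ∀ c' ∈ C, c ≠ c' → 3 ≤ hammingDist c c') ∧ C.card = 2 ^ (n - 1)) ↔
    ((∀ v : BW n, ∃! c : TW n, c ∈ C ∧ hammingDist (emb v) c = 1) ∧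
     (∀ c ∈ C, ∀ c' ∈ C, c ≠ c' → (∀ j, c j = none ↔ c' j = none) →
       ∀ v v' : BW n, hammingDist (emb v) c = 1 → hammingDist (emb v') c' = 1 →
         3 ≤ hammingDist v v')) := by
  classical
  have hstar : ∀ c ∈ C, ∃ j, c j = none ∧ ∀ i, c i = none → i = j :=
    fun c hc => star_of_isX (hX c hc)
  constructor
  · rintro ⟨hmin, hcard⟩
    have hdisj : ∀ (v : BW n) (c : TW n), c ∈ C → ∀ c' ∈ C,
        hammingDist (emb v) c = 1 → hammingDist (emb v) c' = 1 → c = c' := by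
      intro v c hc c' hc' h1 h2
      by_contra hne
      have h3 := hmin c hc c' hc' hne
      have tri : hammingDist c c' ≤ hammingDist c (emb v) + hammingDist (emb v) c' :=
        hammingDist_triangle _ _ _
      rw [hammingDist_comm] at h1
      omega
    constructor
    · -- perfect matching
      have hCne : C.Nonempty := by
        rw [← Finset.card_pos, hcard]
        positivity
      obtain ⟨c0, hc0⟩ := hCne
      obtain ⟨j0, -, -⟩ := hstar c0 hc0
      have hn : 0 < n := j0.pos
      have hbi := card_biUnion_E hX hdisj
      have huniv : C.biUnion E = univ := by
        apply Finset.eq_univ_of_card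
        rw [hbi, hcard, card_BW, ← pow_succ']
        congr 1
        omega
      intro v
      have hv : v ∈ C.biUnion E := huniv ▸ mem_univ v
      obtain ⟨c, hc, hvc⟩ := mem_biUnion.1 hv
      exact ⟨c, ⟨hc, mem_E.1 hvc⟩, fun c' ⟨hc', h'⟩ => hdisj v c' hc' c hc h' (mem_E.1 hvc)⟩
    · -- parallel condition
      intro c hc c' hc' hne hpar v v' h1 h2
      obtain ⟨j, hj, hu⟩ := hstar c hc
      have hj' : c' j = none := (hpar j).1 hj
      have h3 := hmin c hc c' hc' hne
      have e1 := (endpoint_iff hj v).1 h1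
      have e2 := (endpoint_iff hj' v').1 h2
      have hsub : (univ.filter fun i => c i ≠ c' i) ⊆ (univ.filter fun i => v i ≠ v' i) := by
        intro i hi
        simp only [mem_filter, mem_univ, true_and] at hi ⊢
        by_cases hij : i = j
        · subst hij
          rw [hj, hj'] at hi
          exact absurd rfl hi
        · rw [e1 i hij, e2 i hij] at hi
          exact fun h => hi (by rw [h])
      calc 3 ≤ hammingDist c c' := h3
        _ ≤ hammingDist v v' := by
            rw [hd_eq, hd_eq']
            exact Finset.card_le_card hsub
  · rintro ⟨hperf, hpar⟩
    have hdisj : ∀ (v : BW n) (c : TW n), c ∈ C → ∀ c' ∈ C,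
        hammingDist (emb v) c = 1 → hammingDist (emb v) c' = 1 → c = c' := by
      intro v c hc c' hc' h1 h2
      obtain ⟨cu, -, hcu⟩ := hperf v
      rw [hcu c ⟨hc, h1⟩, hcu c' ⟨hc', h2⟩]
    constructor
    · -- min distance 3
      intro c hc c' hc' hne
      obtain ⟨j, hj, hu⟩ := hstar c hc
      obtain ⟨j', hj', hu'⟩ := hstar c' hc'
      by_cases hjj : j = j'
      · -- parallel case
        subst hjj
        have hsome : ∀ i, i ≠ j → c i = some ((c i).getD 0) := by
          intro i hi
          cases hci : c i with
          | none => exact absurd (hu i hci) hi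
          | some a => rfl
        have hsome' : ∀ i, i ≠ j → c' i = some ((c' i).getD 0) := by
          intro i hi
          cases hci : c' i with
          | none => exact absurd (hu' i hci) hi
          | some a => rfl
        set v : BW n := fun i => if i = j then 0 else (c i).getD 0 with hv
        set v' : BW n := fun i => if i = j then 0 else (c' i).getD 0 with hv'
        have h1 : hammingDist (emb v) c = 1 := (endpoint_iff hj v).2 (fun i hi => by
          simp only [hv, if_neg hi]; exact hsome i hi)
        have h2 : hammingDist (emb v') c' = 1 := (endpoint_iff hj' v').2 (fun i hi => by
          simp only [hv', if_neg hi]; exact hsome' i hi)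
        have hiff : ∀ i, c i = none ↔ c' i = none := fun i =>
          ⟨fun h => (hu i h) ▸ hj', fun h => (hu' i h) ▸ hj⟩
        have h3 := hpar c hc c' hc' hne hiff v v' h1 h2
        have hsub : (univ.filter fun i => v i ≠ v' i) ⊆ (univ.filter fun i => c i ≠ c' i) := by
          intro i hi
          simp only [mem_filter, mem_univ, true_and] at hi ⊢
          by_cases hij : i = j
          · subst hij
            simp [hv, hv'] at hi
          · simp only [hv, hv', if_neg hij] at hi
            intro h
            exact hi (by rw [h])
        calc 3 ≤ hammingDist v v' := h3
          _ ≤ hammingDist c c' := by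
              rw [hd_eq, hd_eq']
              exact Finset.card_le_card hsub
      · -- nonparallel case
        by_contra hlt
        push_neg at hlt
        have hcj : c j ≠ c' j := by
          rw [hj]
          intro h
          exact hjj (hu' j h.symm)
        have hcj' : c j' ≠ c' j' := by
          rw [hj']
          intro h
          exact hjj (hu j' h).symm
        have hsub2 : ({j, j'} : Finset (Fin n)) ⊆ univ.filter fun i => c i ≠ c' i := by
          intro i hi
          simp only [mem_insert, mem_singleton] at hi
          simp only [mem_filter, mem_univ, true_and]
          rcases hi with rfl | rfl
          · exact hcj
          · exact hcj'
        have hcard2 : ({j, j'} : Finset (Fin n)).card = 2 := by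
          rw [card_insert_of_notMem (by simpa using hjj), card_singleton]
        have heq : ({j, j'} : Finset (Fin n)) = univ.filter fun i => c i ≠ c' i := by
          apply Finset.eq_of_subset_of_card_le hsub2
          rw [hcard2, ← hd_eq]
          omega
        have hsame : ∀ i, i ≠ j → i ≠ j' → c i = c' i := by
          intro i hi hi'
          by_contra h
          have : i ∈ ({j, j'} : Finset (Fin n)) := by
            rw [heq]
            simp [h]
          simp [hi, hi'] at this
        set v : BW n := fun i => if i = j then (c' j).getD 0 else (c i).getD 0 with hv
        have h1 : hammingDist (emb v) c = 1 := by
          rw [endpoint_iff hj]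
          intro i hi
          simp only [hv, if_neg hi]
          cases hci : c i with
          | none => exact absurd (hu i hci) hi
          | some a => rfl
        have h2 : hammingDist (emb v) c' = 1 := by
          rw [endpoint_iff hj']
          intro i hi
          by_cases hij : i = j
          · subst hij
            simp only [hv, if_pos rfl]
            cases hci : c' i with
            | none => exact absurd (hu' i hci) hjj
            | some a => rfl
          · simp only [hv, if_neg hij]
            rw [← hsame i hij hi]
            cases hci : c i with
            | none => exact absurd (hu i hci) hij
            | some a => rfl
        exact hne (hdisj v c hc c' hc' h1 h2)
    · -- cardinality
      have huniv : C.biUnion E = univ := by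
        apply Finset.eq_univ_of_forall
        intro v
        obtain ⟨c, ⟨hc, h1⟩, -⟩ := hperf v
        exact mem_biUnion.2 ⟨c, hc, mem_E.2 h1⟩
      have hbi := card_biUnion_E hX hdisj
      obtain ⟨c0, ⟨hc0, -⟩, -⟩ := hperf (fun _ => 0)
      obtain ⟨j0, -, -⟩ := hstar c0 hc0
      have hn : 0 < n := j0.pos
      have h2n : 2 * C.card = 2 ^ n := by
        rw [← hbi, huniv, card_univ, card_BW]
      have hp : 2 ^ n = 2 * 2 ^ (n - 1) := by
        rw [← pow_succ']
        congr 1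
        omega
      omega
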